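/- Let n, n_{v1}, n_{v2}, n_y be positive integers, n_v = n_{v1} + n_{v2}. Let A, A_1, A_2 ∈ ℝ^{n×n}, B, B_1, B_3 ∈ ℝ^{n×n_{v1}}, B_2, B_4 ∈ ℝ^{n×n_{v2}}, C, C_1, C_2 ∈ ℝ^{n_y×n}, D, D_2, D_4 ∈ ℝ^{n_y×n_{v2}}, D_1, D_3 ∈ ℝ^{n_y×n_{v1}}. Form Ã = [[A, 0],[A_1, A_2]], B̃ = [[B, 0, 0, 0],[B_1, B_2, B_3, B_4]], C̃ = [[C, 0],[C_1, C_2]], D̃ = [[0, D, 0, 0],[D_1, D_2, D_3, D_4]] (block columns of B̃ and D̃ of widths n_{v1}, n_{v2}, n_{v1}, n_{v2}). Then for every s ∈ ℂ such that the complexifications of sI_n - A and sI_n - A_2 are both invertible, the matrix sI_{2n} - Ã (complexified) is invertible and the submatrix of C̃(sI_{2n} - Ã)^{-1}B̃ + D̃ formed by its first n_y rows and its first n_v columns equals the n_y×n_v matrix whose first n_{v1} columns are C(sI_n - A)^{-1}B and whose last n_{v2} columns are D (real matrices regarded as complex via entrywise inclusion ℝ ↪ ℂ). -/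

import Mathlib

open Matrix

noncomputable section

/-- Entrywise complexification of a real matrix. -/
def cx {k l : Type*} (M : Matrix k l ℝ) : Matrix k l ℂ :=
  M.map (algebraMap ℝ ℂ)

lemma cx_fromBlocks {k l m o : Type*} (A : Matrix k l ℝ) (B : Matrix k m ℝ)
    (C : Matrix o l ℝ) (D : Matrix o m ℝ) :
    cx (fromBlocks A B C D) = fromBlocks (cx A) (cx B) (cx C) (cx D) :=
  Matrix.fromBlocks_map A B C D _

lemma cx_zero {k l : Type*} : cx (0 : Matrix k l ℝ) = 0 := by
  ext i j; simp [cx]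

lemma cx_fromColumns {k l m : Type*} (A : Matrix k l ℝ) (B : Matrix k m ℝ) :
    cx (fromCols A B) = fromCols (cx A) (cx B) := by
  ext i j; cases j <;> simp [cx, fromCols]

lemma fromColumns_add {k l m : Type*} [Add ℂ] (A A' : Matrix k l ℂ) (B B' : Matrix k m ℂ) :
    fromCols A B + fromCols A' B' = fromCols (A + A') (B + B') := by
  ext i j; cases j <;> simp [fromCols]

theorem stmt_9 (n nv1 nv2 ny : ℕ) (hn : 0 < n) (hv1 : 0 < nv1) (hv2 : 0 < nv2) (hy : 0 < ny)
    (A A₁ A₂ : Matrix (Fin n) (Fin n) ℝ)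
    (B B₁ B₃ : Matrix (Fin n) (Fin nv1) ℝ) (B₂ B₄ : Matrix (Fin n) (Fin nv2) ℝ)
    (C C₁ C₂ : Matrix (Fin ny) (Fin n) ℝ)
    (D D₂ D₄ : Matrix (Fin ny) (Fin nv2) ℝ) (D₁ D₃ : Matrix (Fin ny) (Fin nv1) ℝ) :
    ∀ s : ℂ,
      IsUnit (s • (1 : Matrix (Fin n) (Fin n) ℂ) - cx A) →
      IsUnit (s • (1 : Matrix (Fin n) (Fin n) ℂ) - cx A₂) →
      IsUnit (s • (1 : Matrix (Fin n ⊕ Fin n) (Fin n ⊕ Fin n) ℂ)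
          - cx (Matrix.fromBlocks A 0 A₁ A₂)) ∧
        (cx (Matrix.fromBlocks C 0 C₁ C₂)
            * (s • (1 : Matrix (Fin n ⊕ Fin n) (Fin n ⊕ Fin n) ℂ)
                - cx (Matrix.fromBlocks A 0 A₁ A₂))⁻¹
            * cx (Matrix.fromBlocks (Matrix.fromCols B 0) 0
                (Matrix.fromCols B₁ B₂) (Matrix.fromCols B₃ B₄))
          + cx (Matrix.fromBlocks (Matrix.fromCols 0 D) 0
                (Matrix.fromCols D₁ D₂) (Matrix.fromCols D₃ D₄))).submatrix
            Sum.inl Sum.inl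
        = Matrix.fromCols
            (cx C * (s • (1 : Matrix (Fin n) (Fin n) ℂ) - cx A)⁻¹ * cx B) (cx D) := by
  intro s hA hA₂
  have hblock : s • (1 : Matrix (Fin n ⊕ Fin n) (Fin n ⊕ Fin n) ℂ)
      - cx (Matrix.fromBlocks A 0 A₁ A₂)
      = fromBlocks (s • 1 - cx A) 0 (-(cx A₁)) (s • 1 - cx A₂) := by
    rw [cx_fromBlocks, cx_zero, ← fromBlocks_one, fromBlocks_smul]
    ext i j
    cases i <;> cases j <;> simp [fromBlocks, Matrix.sub_apply]
  rw [hblock]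
  refine ⟨isUnit_fromBlocks_zero₁₂.mpr ⟨hA, hA₂⟩, ?_⟩
  rw [inv_fromBlocks_zero₁₂_of_isUnit_iff _ _ _ (iff_of_true hA hA₂)]
  simp only [cx_fromBlocks, cx_fromColumns, cx_zero, fromBlocks_multiply, fromBlocks_add]
  rw [show ∀ (M : Matrix ((Fin ny) ⊕ (Fin ny)) ((Fin nv1 ⊕ Fin nv2) ⊕ (Fin nv1 ⊕ Fin nv2)) ℂ),
      M.submatrix Sum.inl Sum.inl = M.toBlocks₁₁ from fun _ => rfl]
  rw [toBlocks_fromBlocks₁₁]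
  simp [mul_fromCols, fromColumns_add]
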